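/- There is an absolute constant c > 0 such that the following holds. Let S be a finite set of points in ℝ³ in which every two distinct points are at distance at least 2 and whose diameter is at most 2Δ, and let r ≥ 1 be a real number. Then the number of points p ∈ S that form a Delaunay edge of S with some point q ∈ S at distance dist(p,q) ≥ r is at most c·Δ³/r. -/

import Mathlib

noncomputable section
open scoped Classical ENNReal Pointwise
open MeasureTheory Real
set_option maxHeartbeats 1000000

/-- Points of `ℝ³` as Euclidean space. -/
abbrev E3 : Type := EuclideanSpace ℝ (Fin 3)

/-- The point `(x, y, z) ∈ ℝ³`. -/
def mk3 (x y z : ℝ) : E3 := (WithLp.equiv 2 (Fin 3 → ℝ)).symm ![x, y, z]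

/-- `p` and `q` form a Delaunay edge of the finite set `S`: they are distinct points of `S`
lying on a sphere having no point of `S` in its interior. -/
def IsDelaunayEdge (S : Finset E3) (p q : E3) : Prop :=
  p ∈ S ∧ q ∈ S ∧ p ≠ q ∧
    ∃ (c : E3) (ρ : ℝ), 0 < ρ ∧ dist c p = ρ ∧ dist c q = ρ ∧ ∀ s ∈ S, ρ ≤ dist c s

/-- The number of (unordered) Delaunay edges of `S`. -/
def delaunayEdgeCount (S : Finset E3) : ℕ :=
  Set.ncard {pq : E3 × E3 | IsDelaunayEdge S pq.1 pq.2} / 2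

/-- The minimum pairwise distance of a finite point set. -/
def minPairDist (S : Finset E3) : ℝ :=
  sInf {d : ℝ | ∃ p ∈ S, ∃ q ∈ S, p ≠ q ∧ d = dist p q}

/-- The spread of a finite point set: diameter divided by minimum pairwise distance. -/
def spread (S : Finset E3) : ℝ := Metric.diam (S : Set E3) / minPairDist S
lemma key (a u u' : E3) (R t t' : ℝ) (hu : ‖u‖ = 1) (hu' : ‖u'‖ = 1)
    (h1 : R ^ 2 ≤ ‖a + R • u‖ ^ 2) (h2 : R ^ 2 ≤ ‖-a + R • u'‖ ^ 2)
    (hL2 : 2 ≤ ‖a‖) (ht : 0 ≤ t) (ht' : 0 ≤ t')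
    (htR : t ≤ R / 4) (ht'R : t' ≤ R / 4) (hR : 0 < R) :
    2 ≤ ‖a + t • u - t' • u'‖ ^ 2 := by
  have e1 : ‖a + R • u‖ ^ 2 = ‖a‖^2 + 2 * R * inner ℝ a u + R^2 := by
    rw [norm_add_sq_real]
    rw [real_inner_smul_right, norm_smul]
    simp [hu, abs_of_pos hR]
    ring
  have e2 : ‖-a + R • u'‖ ^ 2 = ‖a‖^2 + 2 * R * inner ℝ (-a) u' + R^2 := by
    rw [norm_add_sq_real]
    rw [real_inner_smul_right, norm_smul]
    simp [hu', abs_of_pos hR]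
    ring
  have e3 : ‖a + t • u - t' • u'‖ ^ 2
      = ‖a‖^2 + t^2 + t'^2 + 2*t*inner ℝ a u - 2*t'*(inner ℝ a u' : ℝ) - 2*t*t'*inner ℝ u u' := by
    rw [norm_sub_sq_real, norm_add_sq_real]
    rw [real_inner_smul_right, norm_smul, norm_smul, inner_add_left, real_inner_smul_right,
      real_inner_smul_left, real_inner_smul_right]
    simp [hu, hu', abs_of_nonneg ht, abs_of_nonneg ht']
    ring
  have huu' : (inner ℝ u u' : ℝ) ≤ 1 := by
    calc (inner ℝ u u' : ℝ) ≤ ‖u‖ * ‖u'‖ := real_inner_le_norm u u'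
    _ = 1 := by rw [hu, hu']; ring
  have hinner2 : (inner ℝ (-a) u' : ℝ) = - inner ℝ a u' := by simp
  rw [e1] at h1; rw [e2, hinner2] at h2; rw [e3]
  set X : ℝ := inner ℝ a u
  set Y : ℝ := inner ℝ a u'
  set Z : ℝ := inner ℝ u u'
  set L : ℝ := ‖a‖
  nlinarith [sq_nonneg (t - t'), mul_nonneg ht ht', mul_pos hR hR,
    mul_le_mul_of_nonneg_left htR ht', mul_le_mul_of_nonneg_left ht'R ht,
    mul_nonneg (mul_nonneg ht ht') (sub_nonneg.mpr huu'),
    sq_nonneg L, sq_nonneg (L - 2)]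

/-- If every two distinct points of a finite set `S ⊆ ℝ³` are at distance at least `2` and
the diameter of `S` is at most `2Δ`, then for any `r ≥ 1` at most `c·Δ³/r` points of `S`
have a Delaunay neighbor at distance at least `r`. -/
theorem delaunay_far_reaching_bound :
    ∃ c : ℝ, 0 < c ∧
      ∀ (S : Finset E3) (Δ : ℝ), (∀ p ∈ S, ∀ q ∈ S, p ≠ q → 2 ≤ dist p q) →
        Metric.diam (S : Set E3) ≤ 2 * Δ →
        ∀ r : ℝ, 1 ≤ r →
          (Set.ncard {p : E3 | p ∈ S ∧ ∃ q ∈ S, r ≤ dist p q ∧ IsDelaunayEdge S p q} : ℝ) ≤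
            c * Δ ^ 3 / r := by
  refine ⟨8192, by norm_num, ?_⟩
  intro S Δ hsep hdiam r hr
  have hr0 : (0:ℝ) < r := lt_of_lt_of_le one_pos hr
  have hΔ0 : 0 ≤ Δ := by
    have := Metric.diam_nonneg (s := (S : Set E3)); linarith
  classical
  set P : Finset E3 := S.filter (fun p => ∃ q ∈ S, r ≤ dist p q ∧ IsDelaunayEdge S p q)
    with hPdef
  have hset : {p : E3 | p ∈ S ∧ ∃ q ∈ S, r ≤ dist p q ∧ IsDelaunayEdge S p q} = ↑P := by
    ext p; simp [hPdef, Finset.mem_filter]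
  rw [hset, Set.ncard_coe_finset]
  rcases P.eq_empty_or_nonempty with hPe | hPne
  · rw [hPe]
    simp only [Finset.card_empty, Nat.cast_zero]
    positivity
  -- Nonempty case
  have hPS : ∀ p ∈ P, p ∈ S := fun p hp => (Finset.mem_filter.mp hp).1
  obtain ⟨p₀, hp₀⟩ := hPne
  have hr2Δ : r ≤ 2 * Δ := by
    obtain ⟨q₀, hq₀S, hq₀d, _⟩ := (Finset.mem_filter.mp hp₀).2
    have hb : Bornology.IsBounded (S : Set E3) := S.finite_toSet.isBounded
    have := Metric.dist_le_diam_of_mem hb (hPS p₀ hp₀) hq₀S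
    linarith
  have hΔhalf : (1:ℝ) / 2 ≤ Δ := by linarith
  set R : ℝ := r / 4 with hRdef
  have hR0 : 0 < R := by positivity
  -- choose directions
  have hmain : ∀ p ∈ P, ∃ u : E3, ‖u‖ = 1 ∧ ∀ s ∈ S, R ≤ dist (p + R • u) s := by
    intro p hp
    obtain ⟨q, hqS, hdq, hDel⟩ := (Finset.mem_filter.mp hp).2
    obtain ⟨-, -, -, c, ρ, hρ0, hcp, hcq, hemp⟩ := hDel
    have hρr : r / 2 ≤ ρ := by
      have := dist_triangle p c q
      rw [dist_comm p c] at this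
      linarith [hdq, hcp ▸ hcq ▸ this]
    have hRρ : R ≤ ρ := by rw [hRdef]; linarith
    have hcp' : ‖c - p‖ = ρ := by rw [← dist_eq_norm]; exact hcp
    have hcpne : c - p ≠ 0 := by
      intro h; rw [h, norm_zero] at hcp'; linarith
    refine ⟨ρ⁻¹ • (c - p), ?_, ?_⟩
    · rw [norm_smul, hcp']
      simp [abs_of_pos hρ0]
      field_simp
    · intro s hs
      have hdistcm : dist c (p + R • ρ⁻¹ • (c - p)) = ρ - R := by
        rw [dist_eq_norm]
        have : c - (p + R • ρ⁻¹ • (c - p)) = (1 - R * ρ⁻¹) • (c - p) := by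
          rw [smul_smul]
          rw [sub_smul, one_smul]
          abel
        rw [this, norm_smul, hcp', Real.norm_eq_abs, abs_of_nonneg]
        · field_simp
        · have : R * ρ⁻¹ ≤ 1 := by
            rw [mul_inv_le_iff₀ hρ0]; linarith
          linarith
      have htri := dist_triangle c (p + R • ρ⁻¹ • (c - p)) s
      have := hemp s hs
      have := htri
      rw [hdistcm] at this
      linarith
  choose! u hunorm hmoat using hmain
  -- the family of balls
  set N : ℕ := ⌊r / 16⌋₊ + 1 with hNdef
  set ctr : E3 × ℕ → E3 := fun z => z.1 + (z.2 : ℝ) • u z.1 with hctrdef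
  set Q : Finset (E3 × ℕ) := P ×ˢ Finset.range N with hQdef
  -- pairwise disjoint
  have hdisj : (↑Q : Set (E3 × ℕ)).PairwiseDisjoint
      (fun z => Metric.ball (ctr z) (1/2)) := by
    intro z hz z' hz' hne
    simp only [hQdef, Finset.coe_product, Set.mem_prod, Finset.mem_coe, Finset.mem_range,
      Finset.coe_range, Set.mem_Iio] at hz hz'
    obtain ⟨hzP, hzN⟩ := hz
    obtain ⟨hz'P, hz'N⟩ := hz'
    have hub : (1:ℝ)/2 + 1/2 ≤ dist (ctr z) (ctr z') → Disjoint (Metric.ball (ctr z) (1/2)) (Metric.ball (ctr z') (1/2)) := fun h => Metric.ball_disjoint_ball h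
    refine hub ?_
    have hle : ∀ m : ℕ, m < N → (m : ℝ) ≤ R / 4 := by
      intro m hm
      have hm' : m ≤ ⌊r/16⌋₊ := Nat.lt_succ_iff.mp hm
      have := Nat.floor_le (by positivity : (0:ℝ) ≤ r/16)
      have hcast : (m : ℝ) ≤ (⌊r/16⌋₊ : ℝ) := Nat.cast_le.mpr hm'
      rw [hRdef]; linarith
    by_cases hpp : z.1 = z'.1
    · -- same point, different index
      have hii : z.2 ≠ z'.2 := by
        intro h; exact hne (Prod.ext hpp h)
      have : dist (ctr z) (ctr z') = |(z.2 : ℝ) - (z'.2 : ℝ)| := by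
        rw [hctrdef]
        simp only [hpp]
        rw [dist_eq_norm]
        have : z'.1 + (z.2:ℝ) • u z'.1 - (z'.1 + (z'.2:ℝ) • u z'.1)
            = ((z.2:ℝ) - (z'.2:ℝ)) • u z'.1 := by
          rw [sub_smul]; abel
        rw [this, norm_smul, hunorm z'.1 (hpp ▸ hzP), Real.norm_eq_abs, mul_one]
      rw [this]
      have : (1:ℝ) ≤ |(z.2 : ℝ) - (z'.2 : ℝ)| := by
        have : z.2 ≠ z'.2 := hii
        rcases lt_or_gt_of_ne this with h | h
        · rw [abs_sub_comm, abs_of_nonneg (by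
            simp only [sub_nonneg, Nat.cast_le]; omega)]
          have : z.2 + 1 ≤ z'.2 := h
          have := Nat.cast_le (α := ℝ).mpr this
          push_cast at this ⊢; linarith
        · rw [abs_of_nonneg (by simp only [sub_nonneg, Nat.cast_le]; omega)]
          have : z'.2 + 1 ≤ z.2 := h
          have := Nat.cast_le (α := ℝ).mpr this
          push_cast at this ⊢; linarith
      linarith
    · -- different points
      have h2 : 2 ≤ dist z.1 z'.1 := hsep _ (hPS _ hzP) _ (hPS _ hz'P) hpp
      set a : E3 := z.1 - z'.1 with hadef
      have hna : 2 ≤ ‖a‖ := by rw [hadef, ← dist_eq_norm]; exact h2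
      have h1' : R ≤ ‖a + R • u z.1‖ := by
        have := hmoat z.1 hzP z'.1 (hPS _ hz'P)
        rw [dist_eq_norm] at this
        have heq : z.1 + R • u z.1 - z'.1 = a + R • u z.1 := by rw [hadef]; abel
        rw [heq] at this; exact this
      have h2' : R ≤ ‖-a + R • u z'.1‖ := by
        have := hmoat z'.1 hz'P z.1 (hPS _ hzP)
        rw [dist_eq_norm] at this
        have heq : z'.1 + R • u z'.1 - z.1 = -a + R • u z'.1 := by rw [hadef]; abel
        rw [heq] at this; exact this
      have hkey := key a (u z.1) (u z'.1) R (z.2:ℝ) (z'.2:ℝ)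
        (hunorm _ hzP) (hunorm _ hz'P)
        (by nlinarith [norm_nonneg (a + R • u z.1)])
        (by nlinarith [norm_nonneg (-a + R • u z'.1)])
        hna (Nat.cast_nonneg _) (Nat.cast_nonneg _)
        (hle _ hzN) (hle _ hz'N) hR0
      have hd : dist (ctr z) (ctr z') = ‖a + (z.2:ℝ) • u z.1 - (z'.2:ℝ) • u z'.1‖ := by
        rw [hctrdef, dist_eq_norm]
        congr 1
        rw [hadef]; module
      rw [hd]
      nlinarith [norm_nonneg (a + (z.2:ℝ) • u z.1 - (z'.2:ℝ) • u z'.1)]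
  -- container
  have hcont : ∀ z ∈ Q, Metric.ball (ctr z) (1/2) ⊆ Metric.ball p₀ (4 * Δ) := by
    intro z hz
    simp only [hQdef, Finset.mem_product, Finset.mem_range] at hz
    obtain ⟨hzP, hzN⟩ := hz
    intro x hx
    simp only [Metric.mem_ball] at hx ⊢
    have h1 : dist (ctr z) z.1 ≤ R / 4 := by
      rw [hctrdef, dist_eq_norm]
      have : z.1 + (z.2:ℝ) • u z.1 - z.1 = (z.2:ℝ) • u z.1 := by abel
      rw [this, norm_smul, hunorm _ hzP, Real.norm_eq_abs, mul_one, Nat.abs_cast]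
      have hm' : z.2 ≤ ⌊r/16⌋₊ := Nat.lt_succ_iff.mp hzN
      have := Nat.floor_le (by positivity : (0:ℝ) ≤ r/16)
      have hcast : ((z.2:ℕ) : ℝ) ≤ (⌊r/16⌋₊ : ℝ) := Nat.cast_le.mpr hm'
      rw [hRdef]; linarith
    have h2 : dist z.1 p₀ ≤ 2 * Δ := by
      have hb : Bornology.IsBounded (S : Set E3) := S.finite_toSet.isBounded
      have := Metric.dist_le_diam_of_mem hb (hPS _ hzP) (hPS _ hp₀)
      linarith
    have htri := dist_triangle x (ctr z) p₀
    have htri2 := dist_triangle (ctr z) z.1 p₀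
    have hRΔ : R / 4 ≤ Δ / 8 := by rw [hRdef]; linarith
    calc dist x p₀ ≤ dist x (ctr z) + dist (ctr z) p₀ := htri
      _ ≤ 1/2 + (dist (ctr z) z.1 + dist z.1 p₀) := by
          rw [dist_comm x (ctr z)] at hx ⊢; linarith
      _ ≤ 1/2 + (Δ/8 + 2*Δ) := by linarith
      _ < 4 * Δ := by linarith
  -- measure computation
  have hvol : ∑ z ∈ Q, volume (Metric.ball (ctr z) (1/2)) ≤ volume (Metric.ball p₀ (4*Δ)) := by
    rw [← measure_biUnion_finset hdisj (fun _ _ => measurableSet_ball)]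
    exact measure_mono (Set.iUnion₂_subset hcont)
  set v : ℝ≥0∞ := volume (Metric.ball (0:E3) 1) with hvdef
  have hv0 : v ≠ 0 := (Metric.measure_ball_pos volume 0 one_pos).ne'
  have hvtop : v ≠ ⊤ := measure_ball_lt_top.ne
  have hrank : Module.finrank ℝ E3 = 3 := finrank_euclideanSpace_fin
  have hball : ∀ z : E3 × ℕ, volume (Metric.ball (ctr z) (1/2))
      = ENNReal.ofReal ((1/2:ℝ)^3) * v := by
    intro z
    rw [Measure.addHaar_ball volume _ (by norm_num : (0:ℝ) ≤ 1/2), hrank, hvdef]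
  have hbig : volume (Metric.ball p₀ (4*Δ)) = ENNReal.ofReal ((4*Δ)^3) * v := by
    rw [Measure.addHaar_ball volume _ (by positivity : (0:ℝ) ≤ 4*Δ), hrank, hvdef]
  rw [hbig] at hvol
  simp only [hball] at hvol
  rw [Finset.sum_const] at hvol
  have hQcard : Q.card = P.card * N := by rw [hQdef, Finset.card_product, Finset.card_range]
  rw [hQcard, nsmul_eq_mul] at hvol
  -- cancel v
  rw [← mul_assoc] at hvol
  have hvol2 : (↑(P.card * N) : ℝ≥0∞) * ENNReal.ofReal ((1/2:ℝ)^3) ≤ ENNReal.ofReal ((4*Δ)^3) :=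
    (ENNReal.mul_le_mul_iff_left hv0 hvtop).mp hvol
  have hcast : (↑(P.card * N) : ℝ≥0∞) * ENNReal.ofReal ((1/2:ℝ)^3)
      = ENNReal.ofReal (((P.card * N : ℕ) : ℝ) * (1/2:ℝ)^3) := by
    rw [ENNReal.ofReal_mul (by positivity), ENNReal.ofReal_natCast]
  rw [hcast] at hvol2
  have hreal : ((P.card * N : ℕ) : ℝ) * (1/2:ℝ)^3 ≤ (4*Δ)^3 :=
    (ENNReal.ofReal_le_ofReal_iff (by positivity)).mp hvol2
  have hNr : r / 16 ≤ (N : ℝ) := by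
    have := Nat.lt_floor_add_one (r/16)
    rw [hNdef]; push_cast; linarith
  have hcard0 : (0:ℝ) ≤ (P.card : ℝ) := Nat.cast_nonneg _
  rw [le_div_iff₀ hr0]
  have hPN : ((P.card * N : ℕ) : ℝ) = (P.card:ℝ) * (N:ℝ) := by push_cast; ring
  rw [hPN] at hreal
  have hmul := mul_le_mul_of_nonneg_left hNr hcard0
  have hid : (P.card:ℝ) * (r/16) = (P.card:ℝ) * r / 16 := by ring
  nlinarith [hreal, hmul, hid]
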